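/- Let d be even and Gⱼ = γⱼ ⊗ γⱼ for an irreducible Clifford representation γ₁,…,γ_d. Then the Gⱼ pairwise commute, each Gⱼ is Hermitian with Gⱼ² = I, and there is an orthonormal basis {b_p : p ∈ {±1}^d} of ℂ^{2^d} of joint eigenvectors with Gⱼ b_p = pⱼ b_p; in particular each joint eigenvalue pattern p ∈ {±1}^d occurs with multiplicity exactly one. -/

import Mathlib

open scoped Kronecker Matrix

private lemma aux_exists_joint {n : ℕ} {ι : Type*} [Fintype ι] [DecidableEq ι] [Nonempty ι]
    (G : Fin n → Matrix ι ι ℂ)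
    (hsq : ∀ j, G j * G j = 1)
    (hcomm : ∀ j k, G j * G k = G k * G j) :
    ∃ v : ι → ℂ, v ≠ 0 ∧ ∀ j, ∃ c : ℂ, (c = 1 ∨ c = -1) ∧ G j *ᵥ v = c • v := by
  suffices h : ∀ k : ℕ, ∃ v : ι → ℂ, v ≠ 0 ∧ ∀ j : Fin n, (j : ℕ) < k →
      ∃ c : ℂ, (c = 1 ∨ c = -1) ∧ G j *ᵥ v = c • v by
    obtain ⟨v, hv, hj⟩ := h n
    exact ⟨v, hv, fun j => hj j j.isLt⟩
  intro k
  induction k with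
  | zero =>
      refine ⟨fun _ => 1, ?_, fun j hj => absurd hj (Nat.not_lt_zero _)⟩
      intro h
      have := congrFun h (Classical.arbitrary ι)
      simp at this
  | succ k ih =>
      obtain ⟨v, hv, hj⟩ := ih
      by_cases hk : k < n
      · set jk : Fin n := ⟨k, hk⟩ with hjkdef
        by_cases hw : G jk *ᵥ v + v = 0
        · refine ⟨v, hv, fun j hjk => ?_⟩
          rcases Nat.lt_succ_iff_lt_or_eq.mp hjk with h | h
          · exact hj j h
          · have hjeq : j = jk := Fin.ext h
            refine ⟨-1, Or.inr rfl, ?_⟩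
            have hneg : G jk *ᵥ v = -v := eq_neg_of_add_eq_zero_left hw
            rw [hjeq, hneg]
            simp
        · refine ⟨G jk *ᵥ v + v, hw, fun j hjk => ?_⟩
          rcases Nat.lt_succ_iff_lt_or_eq.mp hjk with h | h
          · obtain ⟨c, hc, hcv⟩ := hj j h
            refine ⟨c, hc, ?_⟩
            rw [Matrix.mulVec_add, Matrix.mulVec_mulVec, hcomm j jk, ← Matrix.mulVec_mulVec,
              hcv, Matrix.mulVec_smul, smul_add]
          · have hjeq : j = jk := Fin.ext h
            refine ⟨1, Or.inl rfl, ?_⟩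
            rw [hjeq, Matrix.mulVec_add, Matrix.mulVec_mulVec, hsq, Matrix.one_mulVec, one_smul,
              add_comm]
      · refine ⟨v, hv, fun j hjk => hj j ?_⟩
        exact lt_of_lt_of_le j.isLt (le_of_not_gt hk)

private lemma aux_conj_list {n : ℕ} {ι : Type*} [Fintype ι] [DecidableEq ι]
    (G U : Fin n → Matrix ι ι ℂ)
    (hrel : ∀ j k, G j * U k = (if j = k then (1 : ℂ) else -1) • (U k * G j)) :
    ∀ L : List (Fin n), L.Nodup → ∀ j,
      G j * (L.map U).prod =
        ((-1 : ℂ) ^ L.length * (if j ∈ L then -1 else 1)) • ((L.map U).prod * G j) := by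
  intro L
  induction L with
  | nil => intro _ j; simp
  | cons a t ih =>
      intro hnd j
      obtain ⟨ha, ht⟩ := List.nodup_cons.mp hnd
      have ihj := ih ht j
      simp only [List.map_cons, List.prod_cons]
      rw [← mul_assoc, hrel j a, Matrix.smul_mul, mul_assoc, ihj, Matrix.mul_smul,
        smul_smul, ← mul_assoc (U a)]
      congr 1
      have hlen : (a :: t).length = t.length + 1 := rfl
      rw [hlen, pow_succ]
      by_cases hja : j = a
      · have hjt : j ∉ t := hja ▸ ha
        rw [if_pos hja, if_pos (List.mem_cons.mpr (Or.inl hja)), if_neg hjt]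
        ring
      · rw [if_neg hja]
        by_cases hjt : j ∈ t
        · rw [if_pos hjt, if_pos (List.mem_cons.mpr (Or.inr hjt))]
          ring
        · rw [if_neg hjt, if_neg (by simp [List.mem_cons, hja, hjt])]
          ring

private lemma aux_prod_unit {n : ℕ} {ι : Type*} [Fintype ι] [DecidableEq ι]
    (U : Fin n → Matrix ι ι ℂ) (hU : ∀ k, (U k)ᴴ = U k) (hUsq : ∀ k, U k * U k = 1) :
    ∀ L : List (Fin n), ((L.map U).prod)ᴴ * (L.map U).prod = 1 := by
  intro L
  induction L with
  | nil => simp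
  | cons a t ih =>
      simp only [List.map_cons, List.prod_cons]
      rw [Matrix.conjTranspose_mul, hU, mul_assoc, ← mul_assoc (U a), hUsq, one_mul, ih]

theorem joint_diagonalization_even_case
    {d : ℕ} (hd : Even d)
    (γ : Fin d → Matrix (Fin (2 ^ (d / 2))) (Fin (2 ^ (d / 2))) ℂ)
    (hherm : ∀ j, (γ j).IsHermitian)
    (hsq : ∀ j, γ j * γ j = 1)
    (hanti : ∀ j k, j ≠ k → γ j * γ k = -(γ k * γ j)) :
    (∀ j k, (γ j ⊗ₖ γ j) * (γ k ⊗ₖ γ k) = (γ k ⊗ₖ γ k) * (γ j ⊗ₖ γ j)) ∧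
    (∀ j, (γ j ⊗ₖ γ j).IsHermitian ∧ (γ j ⊗ₖ γ j) * (γ j ⊗ₖ γ j) = 1) ∧
    ∃ b : OrthonormalBasis (Fin d → ({1, -1} : Finset ℝ)) ℂ
        (EuclideanSpace ℂ (Fin (2 ^ (d / 2)) × Fin (2 ^ (d / 2)))),
      ∀ (p : Fin d → ({1, -1} : Finset ℝ)) (j : Fin d),
        Matrix.toEuclideanLin (γ j ⊗ₖ γ j) (b p) = ((p j : ℝ) : ℂ) • b p := by
  classical
  set G : Fin d → Matrix (Fin (2 ^ (d / 2)) × Fin (2 ^ (d / 2)))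
      (Fin (2 ^ (d / 2)) × Fin (2 ^ (d / 2))) ℂ := fun j => γ j ⊗ₖ γ j with hG
  have hGsq : ∀ j, G j * G j = 1 := by
    intro j
    show (γ j ⊗ₖ γ j) * (γ j ⊗ₖ γ j) = 1
    rw [← Matrix.mul_kronecker_mul, hsq, Matrix.one_kronecker_one]
  have hGcomm : ∀ j k, G j * G k = G k * G j := by
    intro j k
    by_cases hjk : j = k
    · subst hjk; rfl
    · show (γ j ⊗ₖ γ j) * (γ k ⊗ₖ γ k) = (γ k ⊗ₖ γ k) * (γ j ⊗ₖ γ j)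
      rw [← Matrix.mul_kronecker_mul, ← Matrix.mul_kronecker_mul, hanti j k hjk]
      ext ⟨i1, i2⟩ ⟨l1, l2⟩
      simp only [Matrix.kroneckerMap_apply, Matrix.neg_apply]
      ring
  have hkherm : ∀ A B : Matrix (Fin (2 ^ (d / 2))) (Fin (2 ^ (d / 2))) ℂ,
      A.IsHermitian → B.IsHermitian → (A ⊗ₖ B).IsHermitian := by
    intro A B hA hB
    show (A ⊗ₖ B)ᴴ = A ⊗ₖ B
    ext ⟨i1, i2⟩ ⟨l1, l2⟩
    simp only [Matrix.conjTranspose_apply, Matrix.kroneckerMap_apply, star_mul']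
    rw [← Matrix.conjTranspose_apply, ← Matrix.conjTranspose_apply, hA.eq, hB.eq]
  have hGherm : ∀ j, (G j).IsHermitian := fun j => hkherm _ _ (hherm j) (hherm j)
  refine ⟨hGcomm, fun j => ⟨hGherm j, hGsq j⟩, ?_⟩
  -- flip operators
  set U : Fin d → Matrix (Fin (2 ^ (d / 2)) × Fin (2 ^ (d / 2)))
      (Fin (2 ^ (d / 2)) × Fin (2 ^ (d / 2))) ℂ :=
    fun k => γ k ⊗ₖ (1 : Matrix (Fin (2 ^ (d / 2))) (Fin (2 ^ (d / 2))) ℂ) with hU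
  have hUsq : ∀ k, U k * U k = 1 := by
    intro k
    show (γ k ⊗ₖ (1 : Matrix (Fin (2 ^ (d / 2))) (Fin (2 ^ (d / 2))) ℂ)) *
        (γ k ⊗ₖ (1 : Matrix (Fin (2 ^ (d / 2))) (Fin (2 ^ (d / 2))) ℂ)) = 1
    rw [← Matrix.mul_kronecker_mul, hsq, mul_one, Matrix.one_kronecker_one]
  have hUherm : ∀ k, (U k)ᴴ = U k := fun k => hkherm _ _ (hherm k) Matrix.isHermitian_one
  have hrel : ∀ j k, G j * U k = (if j = k then (1 : ℂ) else -1) • (U k * G j) := by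
    intro j k
    show (γ j ⊗ₖ γ j) * (γ k ⊗ₖ (1 : Matrix (Fin (2 ^ (d / 2))) (Fin (2 ^ (d / 2))) ℂ)) = _
    by_cases hjk : j = k
    · subst hjk
      rw [if_pos rfl, one_smul]
      show _ = (γ j ⊗ₖ (1 : Matrix (Fin (2 ^ (d / 2))) (Fin (2 ^ (d / 2))) ℂ)) * (γ j ⊗ₖ γ j)
      rw [← Matrix.mul_kronecker_mul, ← Matrix.mul_kronecker_mul, mul_one, one_mul]
    · rw [if_neg hjk]
      show _ = (-1 : ℂ) •
        ((γ k ⊗ₖ (1 : Matrix (Fin (2 ^ (d / 2))) (Fin (2 ^ (d / 2))) ℂ)) * (γ j ⊗ₖ γ j))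
      rw [← Matrix.mul_kronecker_mul, ← Matrix.mul_kronecker_mul, mul_one, one_mul,
        hanti j k hjk]
      ext ⟨i1, i2⟩ ⟨l1, l2⟩
      simp only [Matrix.kroneckerMap_apply, Matrix.neg_apply, Matrix.smul_apply, smul_eq_mul]
      ring
  haveI : NeZero (2 ^ (d / 2)) := ⟨by positivity⟩
  haveI : Nonempty (Fin (2 ^ (d / 2)) × Fin (2 ^ (d / 2))) := instNonemptyProd
  obtain ⟨v, hv0, hvj⟩ := aux_exists_joint G hGsq hGcomm
  choose q hq1 hq2 using hvj
  -- patterns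
  have hpc : ∀ (p : Fin d → ({1, -1} : Finset ℝ)) (j : Fin d),
      ((p j : ℝ) : ℂ) = 1 ∨ ((p j : ℝ) : ℂ) = -1 := by
    intro p j
    rcases Finset.mem_insert.mp (p j).2 with h | h
    · left; rw [h]; norm_num
    · right; rw [Finset.mem_singleton.mp h]; norm_num
  set F : (Fin d → ({1, -1} : Finset ℝ)) → Finset (Fin d) :=
    fun p => Finset.univ.filter (fun j => ((p j : ℝ) : ℂ) ≠ q j) with hF
  set S : (Fin d → ({1, -1} : Finset ℝ)) → Finset (Fin d) :=
    fun p => if Even (F p).card then F p else (F p)ᶜ with hS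
  set W : (Fin d → ({1, -1} : Finset ℝ)) →
      Matrix (Fin (2 ^ (d / 2)) × Fin (2 ^ (d / 2))) (Fin (2 ^ (d / 2)) × Fin (2 ^ (d / 2))) ℂ :=
    fun p => (((S p).toList).map U).prod with hW
  set w : (Fin d → ({1, -1} : Finset ℝ)) → (Fin (2 ^ (d / 2)) × Fin (2 ^ (d / 2)) → ℂ) :=
    fun p => W p *ᵥ v with hw
  have hflip : ∀ (p : Fin d → ({1, -1} : Finset ℝ)) (j : Fin d),
      ((-1 : ℂ) ^ (S p).card * (if j ∈ S p then -1 else 1)) * q j = ((p j : ℝ) : ℂ) := by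
    intro p j
    have hSval : S p = if Even (F p).card then F p else (F p)ᶜ := rfl
    have hstep1 : ((-1 : ℂ) ^ (S p).card * (if j ∈ S p then -1 else 1)) =
        (if j ∈ F p then -1 else 1) := by
      by_cases he : Even (F p).card
      · rw [hSval, if_pos he, he.neg_one_pow, one_mul]
      · rw [hSval, if_neg he]
        have hodd : Odd (F p).card := Nat.odd_iff.mpr (Nat.not_even_iff.mp he)
        have hcompl : Odd ((F p)ᶜ).card := by
          rw [Finset.card_compl, Fintype.card_fin]
          exact Nat.Even.sub_odd (by simpa using (F p).card_le_univ) hd hodd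
        rw [hcompl.neg_one_pow]
        by_cases hjF : j ∈ F p
        · rw [if_neg (by simp [Finset.mem_compl, hjF]), if_pos hjF]
          norm_num
        · rw [if_pos (by simp [Finset.mem_compl, hjF]), if_neg hjF]
          norm_num
    rw [hstep1]
    have hmem : j ∈ F p ↔ ((p j : ℝ) : ℂ) ≠ q j := by
      simp [hF]
    by_cases hjF : j ∈ F p
    · rw [if_pos hjF]
      have hne := hmem.mp hjF
      rcases hpc p j with hp1 | hp1 <;> rcases hq1 j with hq1' | hq1'
      · exact absurd (hp1.trans hq1'.symm) hne
      · rw [hp1, hq1']; norm_num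
      · rw [hp1, hq1']; norm_num
      · exact absurd (hp1.trans hq1'.symm) hne
    · rw [if_neg hjF]
      have heq : ((p j : ℝ) : ℂ) = q j := not_not.mp (mt hmem.mpr hjF)
      rw [one_mul, heq]
  have hweig : ∀ (p : Fin d → ({1, -1} : Finset ℝ)) (j : Fin d),
      G j *ᵥ w p = ((p j : ℝ) : ℂ) • w p := by
    intro p j
    have hc := aux_conj_list G U hrel ((S p).toList) (S p).nodup_toList j
    have hwp : w p = (((S p).toList).map U).prod *ᵥ v := rfl
    rw [hwp, Matrix.mulVec_mulVec, hc, Matrix.smul_mulVec, ← Matrix.mulVec_mulVec,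
      hq2 j, Matrix.mulVec_smul, smul_smul]
    simp only [Finset.length_toList, Finset.mem_toList]
    rw [hflip p j]
  have hWunit : ∀ p, (W p)ᴴ * W p = 1 := fun p => aux_prod_unit U hUherm hUsq _
  have hw0 : ∀ p : Fin d → ({1, -1} : Finset ℝ), w p ≠ 0 := by
    intro p h
    apply hv0
    have hwp : w p = W p *ᵥ v := rfl
    have h2 : (W p)ᴴ *ᵥ (W p *ᵥ v) = 0 := by rw [← hwp, h, Matrix.mulVec_zero]
    rwa [Matrix.mulVec_mulVec, hWunit, Matrix.one_mulVec] at h2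
  -- move to EuclideanSpace
  set u : (Fin d → ({1, -1} : Finset ℝ)) →
      EuclideanSpace ℂ (Fin (2 ^ (d / 2)) × Fin (2 ^ (d / 2))) :=
    fun p => (WithLp.equiv 2 _).symm (w p) with hu
  have hu0 : ∀ p, u p ≠ 0 := by
    intro p h
    apply hw0 p
    have hup : u p = (WithLp.equiv 2 _).symm (w p) := rfl
    rw [hup] at h
    have := congrArg (WithLp.equiv 2 _) h
    simpa using this
  have hnu : ∀ p, ‖u p‖ ≠ 0 := fun p => norm_ne_zero_iff.mpr (hu0 p)
  set b : (Fin d → ({1, -1} : Finset ℝ)) →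
      EuclideanSpace ℂ (Fin (2 ^ (d / 2)) × Fin (2 ^ (d / 2))) :=
    fun p => ((‖u p‖⁻¹ : ℝ) : ℂ) • u p with hb
  have hbnorm : ∀ p, ‖b p‖ = 1 := by
    intro p
    have hbp : b p = ((‖u p‖⁻¹ : ℝ) : ℂ) • u p := rfl
    rw [hbp, norm_smul, Complex.norm_real, Real.norm_eq_abs, abs_inv,
      abs_of_nonneg (norm_nonneg _), inv_mul_cancel₀ (hnu p)]
  have hbeig : ∀ (p : Fin d → ({1, -1} : Finset ℝ)) (j : Fin d),
      Matrix.toEuclideanLin (G j) (b p) = ((p j : ℝ) : ℂ) • b p := by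
    intro p j
    have hbp : b p = ((‖u p‖⁻¹ : ℝ) : ℂ) • u p := rfl
    have hup : u p = (WithLp.equiv 2 _).symm (w p) := rfl
    rw [hbp, map_smul, hup, WithLp.equiv_symm_apply, Matrix.toEuclideanLin_toLp, Matrix.toLin'_apply,
      hweig p j, WithLp.toLp_smul, smul_comm]
  clear_value b
  -- orthonormality
  have hsymm : ∀ j, (Matrix.toEuclideanLin (G j)).IsSymmetric :=
    fun j => Matrix.isHermitian_iff_isSymmetric.mp (hGherm j)
  have horth : Orthonormal ℂ b := by
    rw [orthonormal_iff_ite]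
    intro p p'
    by_cases hpp : p = p'
    · subst hpp
      rw [if_pos rfl, @inner_self_eq_norm_sq_to_K ℂ, hbnorm p]
      norm_num
    · rw [if_neg hpp]
      obtain ⟨j, hj⟩ : ∃ j, ((p j : ℝ) : ℂ) ≠ ((p' j : ℝ) : ℂ) := by
        by_contra h
        push_neg at h
        apply hpp
        funext j
        exact Subtype.ext (by exact_mod_cast h j)
      have h1 := hsymm j (b p) (b p')
      rw [hbeig p j, hbeig p' j, inner_smul_left, inner_smul_right, Complex.conj_ofReal] at h1
      by_contra hne
      exact hj (mul_right_cancel₀ hne h1)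
  haveI : Nonempty (Fin d → ({1, -1} : Finset ℝ)) :=
    ⟨fun _ => ⟨1, Finset.mem_insert_self _ _⟩⟩
  have hcard : Fintype.card (Fin d → ({1, -1} : Finset ℝ)) =
      Module.finrank ℂ (EuclideanSpace ℂ (Fin (2 ^ (d / 2)) × Fin (2 ^ (d / 2)))) := by
    rw [finrank_euclideanSpace, Fintype.card_prod, Fintype.card_fin, Fintype.card_fun]
    have h2 : Fintype.card ({1, -1} : Finset ℝ) = 2 := by
      rw [Fintype.card_coe]
      rw [Finset.card_insert_of_notMem (by norm_num), Finset.card_singleton]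
    rw [h2, Fintype.card_fin]
    obtain ⟨m, rfl⟩ := hd
    have hm : (m + m) / 2 = m := by omega
    rw [hm, ← pow_add]
  let B := basisOfOrthonormalOfCardEqFinrank horth hcard
  have hBb : ⇑B = b := coe_basisOfOrthonormalOfCardEqFinrank horth hcard
  refine ⟨B.toOrthonormalBasis (by rwa [hBb]), ?_⟩
  intro p j
  have hob : (B.toOrthonormalBasis (by rwa [hBb])) p = b p := by
    rw [Module.Basis.coe_toOrthonormalBasis, hBb]
  rw [hob]
  exact hbeig p j
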